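/- Let S be a set of N > d points of ℝ^d in general position. The number of distinct labelings in {-1,+1}^N of S realizable by affine classifiers x ↦ sign(hᵀx + b) is at most 2^{d+1} · C(N, d). -/

import Mathlib

set_option maxHeartbeats 1000000

open Classical in
/-- sign function: 1 if u ≥ 0, -1 otherwise. -/
noncomputable def sgnR (u : ℝ) : ℤ := if 0 ≤ u then 1 else -1

namespace Stmt4Aux

open Finset Submodule

variable {d N : ℕ}

noncomputable def row (x : Fin N → Fin d → ℝ) (i : Fin N) : EuclideanSpace ℝ (Fin (d+1)) :=
  WithLp.toLp 2 (Fin.snoc (x i) 1 : Fin (d+1) → ℝ)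

noncomputable def val (x : Fin N → Fin d → ℝ) (v : EuclideanSpace ℝ (Fin (d+1))) (i : Fin N) : ℝ :=
  ∑ j, row x i j * v j

lemma val_snoc (x : Fin N → Fin d → ℝ) (h : Fin d → ℝ) (b : ℝ) (i : Fin N) :
    val x (WithLp.toLp 2 (Fin.snoc h b : Fin (d+1) → ℝ)) i = (∑ j, h j * x i j) + b := by
  unfold val row
  rw [Fin.sum_univ_castSucc]
  simp [Fin.snoc_castSucc, Fin.snoc_last, mul_comm]

lemma val_self (x : Fin N → Fin d → ℝ) (v : EuclideanSpace ℝ (Fin (d+1))) (i : Fin N) :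
    val x v i = (∑ j, Fin.init (v : Fin (d+1) → ℝ) j * x i j) + v (Fin.last d) := by
  rw [← val_snoc, Fin.snoc_init_self, WithLp.toLp_ofLp]

lemma val_inner (x : Fin N → Fin d → ℝ) (v : EuclideanSpace ℝ (Fin (d+1))) (i : Fin N) :
    (inner ℝ (row x i) v : ℝ) = val x v i := by
  simp [val, PiLp.inner_apply, mul_comm]

lemma val_add_smul (x : Fin N → Fin d → ℝ) (v w : EuclideanSpace ℝ (Fin (d+1))) (t : ℝ)
    (i : Fin N) : val x (v + t • w) i = val x v i + t * val x w i := by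
  simp [val, mul_add, Finset.sum_add_distrib, Finset.mul_sum, mul_left_comm]

lemma val_smul (x : Fin N → Fin d → ℝ) (w : EuclideanSpace ℝ (Fin (d+1))) (t : ℝ)
    (i : Fin N) : val x (t • w) i = t * val x w i := by
  simp [val, Finset.mul_sum, mul_left_comm]

lemma val_neg (x : Fin N → Fin d → ℝ) (w : EuclideanSpace ℝ (Fin (d+1)))
    (i : Fin N) : val x (-w) i = - val x w i := by
  simp [val]

variable {x : Fin N → Fin d → ℝ}

def Hgen (x : Fin N → Fin d → ℝ) : Prop :=
  ∀ (h : Fin d → ℝ) (b : ℝ), h ≠ 0 →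
      Set.ncard {i : Fin N | (∑ j, h j * x i j) + b = 0} ≤ d

lemma keyA (hgen : Hgen x) {T : Finset (Fin N)} (hT : d + 1 ≤ T.card)
    {v : EuclideanSpace ℝ (Fin (d+1))} (hv : ∀ i ∈ T, val x v i = 0) : v = 0 := by
  by_cases hh : (Fin.init (v : Fin (d+1) → ℝ)) = 0
  · obtain ⟨i, hi⟩ : T.Nonempty := Finset.card_pos.mp (by omega)
    have h0 : val x v i = v (Fin.last d) := by
      rw [val_self, hh]; simp
    have hb : v (Fin.last d) = 0 := by rw [← h0]; exact hv i hi
    ext j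
    induction j using Fin.lastCases with
    | last => simpa using hb
    | cast j => simpa [Fin.init] using congrFun hh j
  · exfalso
    have hle := hgen (Fin.init (v : Fin (d+1) → ℝ)) (v (Fin.last d)) hh
    have hsub : (↑T : Set (Fin N)) ⊆
        {i : Fin N | (∑ j, Fin.init (v : Fin (d+1) → ℝ) j * x i j) + v (Fin.last d) = 0} := by
      intro i hi
      have := hv i hi
      rw [val_self] at this
      exact this
    have hc : T.card ≤ Set.ncard {i : Fin N |
        (∑ j, Fin.init (v : Fin (d+1) → ℝ) j * x i j) + v (Fin.last d) = 0} := by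
      rw [← Set.ncard_coe_finset]
      exact Set.ncard_le_ncard hsub (Set.toFinite _)
    omega

lemma vanish_all (hdN : d < N) (hgen : Hgen x) {w : EuclideanSpace ℝ (Fin (d+1))}
    (hw : ∀ i, val x w i = 0) : w = 0 := by
  obtain ⟨T, -, hT⟩ := Finset.exists_subset_card_eq
    (s := (Finset.univ : Finset (Fin N))) (n := d + 1)
    (by rw [Finset.card_univ, Fintype.card_fin]; omega)
  exact keyA hgen (le_of_eq hT.symm) (fun i _ => hw i)

lemma indep_rows (hdN : d < N) (hgen : Hgen x) {Z : Finset (Fin N)} (hZ : Z.card ≤ d + 1) :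
    LinearIndependent ℝ (fun i : Z => row x i) := by
  obtain ⟨T, hZT, -, hT⟩ := Finset.exists_subsuperset_card_eq
    (Finset.subset_univ Z) (by omega : Z.card ≤ d + 1)
    (by rw [Finset.card_univ, Fintype.card_fin]; omega)
  have hspan : Submodule.span ℝ (Set.range (fun i : T => row x i)) = ⊤ := by
    rw [← Submodule.orthogonal_eq_bot_iff]
    rw [Submodule.eq_bot_iff]
    intro w hw
    rw [Submodule.mem_orthogonal] at hw
    refine keyA hgen (le_of_eq hT.symm) (fun i hi => ?_)
    rw [← val_inner]
    exact hw _ (Submodule.subset_span ⟨⟨i, hi⟩, rfl⟩)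
  have hTi : LinearIndependent ℝ (fun i : T => row x i) := by
    refine linearIndependent_of_top_le_span_of_card_eq_finrank (le_of_eq hspan.symm) ?_
    simp [hT]
  have hinj : Function.Injective (fun i : Z => (⟨i.1, hZT i.2⟩ : T)) := by
    intro a b hab
    exact Subtype.ext (congrArg Subtype.val hab :)
  exact hTi.comp (fun i : Z => (⟨i.1, hZT i.2⟩ : T)) hinj

noncomputable def Zf (x : Fin N → Fin d → ℝ) (v : EuclideanSpace ℝ (Fin (d+1))) :
    Finset (Fin N) :=
  @Finset.filter _ (fun i => val x v i = 0) (Classical.decPred _) Finset.univ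

lemma mem_Zf {v : EuclideanSpace ℝ (Fin (d+1))} {i : Fin N} :
    i ∈ Zf x v ↔ val x v i = 0 := by
  simp [Zf]

noncomputable def Wsp (x : Fin N → Fin d → ℝ) (Z : Finset (Fin N)) :
    Submodule ℝ (EuclideanSpace ℝ (Fin (d+1))) :=
  (Submodule.span ℝ (row x '' ↑Z))ᗮ

lemma mem_Wsp {Z : Finset (Fin N)} {v : EuclideanSpace ℝ (Fin (d+1))} :
    v ∈ Wsp x Z ↔ ∀ i ∈ Z, val x v i = 0 := by
  rw [Wsp, Submodule.mem_orthogonal]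
  constructor
  · intro hv i hi
    rw [← val_inner]
    exact hv _ (Submodule.subset_span ⟨i, hi, rfl⟩)
  · intro hv u hu
    induction hu using Submodule.span_induction with
    | mem u hu => obtain ⟨i, hi, rfl⟩ := hu; rw [val_inner]; exact hv i hi
    | zero => simp
    | add a b _ _ ha hb => rw [inner_add_left, ha, hb, add_zero]
    | smul r a _ ha => rw [inner_smul_left, ha, mul_zero]

lemma finrank_Wsp (hdN : d < N) (hgen : Hgen x) {Z : Finset (Fin N)}
    (hZ : Z.card ≤ d + 1) :
    Module.finrank ℝ (Wsp x Z) = d + 1 - Z.card := by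
  have hind := indep_rows hdN hgen hZ
  have hKr : Module.finrank ℝ (Submodule.span ℝ (row x '' ↑Z)) = Z.card := by
    have h1 : (row x '' ↑Z) = Set.range (fun i : Z => row x i) := by
      ext y
      constructor
      · rintro ⟨i, hi, rfl⟩; exact ⟨⟨i, hi⟩, rfl⟩
      · rintro ⟨⟨i, hi⟩, rfl⟩; exact ⟨i, hi, rfl⟩
    rw [h1, finrank_span_eq_card hind]
    simp
  have hsum := Submodule.finrank_add_finrank_orthogonal
    (K := Submodule.span ℝ (row x '' (↑Z : Set (Fin N))))
  rw [hKr, finrank_euclideanSpace_fin] at hsum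
  rw [Wsp]
  omega

lemma grow (hdN : d < N) (hgen : Hgen x) {q : Fin N → ℤ}
    (hq1 : ∀ i, q i = 1 ∨ q i = -1)
    {v : EuclideanSpace ℝ (Fin (d+1))} (hv0 : v ≠ 0)
    (hvP : ∀ i, 0 ≤ (q i : ℝ) * val x v i) (hcard : (Zf x v).card < d) :
    ∃ v', v' ≠ 0 ∧ (∀ i, 0 ≤ (q i : ℝ) * val x v' i) ∧ (Zf x v).card < (Zf x v').card := by
  have hqne : ∀ i, (q i : ℝ) ≠ 0 := by
    intro i; rcases hq1 i with h | h <;> simp [h]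
  have hW : Module.finrank ℝ (Wsp x (Zf x v)) = d + 1 - (Zf x v).card :=
    finrank_Wsp hdN hgen (by omega)
  have hvW : v ∈ Wsp x (Zf x v) := mem_Wsp.mpr (fun i hi => mem_Zf.mp hi)
  have hnle : ¬ (Wsp x (Zf x v) ≤ Submodule.span ℝ {v}) := by
    intro hle
    have h1 := Submodule.finrank_mono hle
    rw [hW, finrank_span_singleton hv0] at h1
    omega
  obtain ⟨w₀, hw₀W, hw₀v⟩ := SetLike.not_le_iff_exists.mp hnle
  clear hnle
  have hw₀Z : ∀ i ∈ Zf x v, val x w₀ i = 0 := mem_Wsp.mp hw₀W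
  obtain ⟨i₂, hi₂⟩ : ∃ i, val x w₀ i ≠ 0 := by
    by_contra hco
    push_neg at hco
    exact hw₀v (by rw [vanish_all hdN hgen hco]; exact Submodule.zero_mem _)
  obtain ⟨w, hwv, hwZ, i₃, hi₃⟩ :
      ∃ w, w ∉ Submodule.span ℝ {v} ∧ (∀ i ∈ Zf x v, val x w i = 0) ∧
        ∃ i, (q i : ℝ) * val x w i < 0 := by
    rcases lt_or_gt_of_ne (mul_ne_zero (hqne i₂) hi₂) with hlt | hgt
    · exact ⟨w₀, hw₀v, hw₀Z, i₂, hlt⟩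
    · refine ⟨-w₀, fun hmem => hw₀v ?_, fun i hi => by rw [val_neg, hw₀Z i hi, neg_zero],
        i₂, ?_⟩
      · have := Submodule.neg_mem _ hmem
        rwa [neg_neg] at this
      · rw [val_neg]; nlinarith
  classical
  set S : Finset (Fin N) := Finset.univ.filter (fun i => (q i : ℝ) * val x w i < 0) with hS
  have hSne : S.Nonempty := ⟨i₃, by simp [hS, hi₃]⟩
  obtain ⟨i0, hi0S, hi0min⟩ := S.exists_min_image
    (fun i => ((q i : ℝ) * val x v i) / (-((q i : ℝ) * val x w i))) hSne
  have hi0neg : (q i0 : ℝ) * val x w i0 < 0 := by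
    have := hi0S
    simp only [hS, Finset.mem_filter] at this
    exact this.2
  set t : ℝ := ((q i0 : ℝ) * val x v i0) / (-((q i0 : ℝ) * val x w i0)) with ht
  have ht0 : 0 ≤ t := div_nonneg (hvP i0) (by linarith)
  refine ⟨v + t • w, ?_, ?_, ?_⟩
  · intro h0
    by_cases htz : t = 0
    · rw [htz] at h0
      simp only [zero_smul, add_zero] at h0
      exact hv0 h0
    · apply hwv
      rw [Submodule.mem_span_singleton]
      refine ⟨-t⁻¹, ?_⟩
      have h1 : v = -(t • w) := add_eq_zero_iff_eq_neg.mp h0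
      rw [h1, smul_neg, neg_smul, neg_neg, smul_smul, inv_mul_cancel₀ htz, one_smul]
  · intro i
    rw [val_add_smul]
    by_cases hc : (q i : ℝ) * val x w i < 0
    · have hiS : i ∈ S := by simp [hS, hc]
      have hmin := hi0min i hiS
      have hden : 0 < -((q i : ℝ) * val x w i) := by linarith
      have h2 : t * -((q i : ℝ) * val x w i) ≤ (q i : ℝ) * val x v i :=
        (le_div_iff₀ hden).mp hmin
      nlinarith [hvP i]
    · push_neg at hc
      nlinarith [hvP i, mul_nonneg ht0 hc]
  · have hcne : (q i0 : ℝ) * val x w i0 ≠ 0 := ne_of_lt hi0neg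
    have hsub : insert i0 (Zf x v) ⊆ Zf x (v + t • w) := by
      intro i hi
      rw [mem_Zf, val_add_smul]
      rcases Finset.mem_insert.mp hi with rfl | hiZ
      · have hvw : val x w i ≠ 0 := by
          intro h
          rw [h, mul_zero] at hi0neg
          exact lt_irrefl 0 hi0neg
        have ht' : t = val x v i / -(val x w i) := by
          rw [ht, ← mul_neg, mul_div_mul_left _ _ (hqne i)]
        have h5 : t * val x w i = - val x v i := by
          rw [ht', div_mul_eq_mul_div, div_neg, mul_div_assoc, div_self hvw, mul_one]
        rw [h5]
        ring
      · rw [mem_Zf.mp hiZ, hwZ i hiZ, mul_zero, add_zero]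
    have hi0Z : i0 ∉ Zf x v := by
      intro hmem
      rw [hwZ i0 hmem, mul_zero] at hi0neg
      exact lt_irrefl 0 hi0neg
    calc (Zf x v).card < (insert i0 (Zf x v)).card := by
          rw [Finset.card_insert_of_notMem hi0Z]; omega
      _ ≤ _ := Finset.card_le_card hsub

lemma reach (hdN : d < N) (hgen : Hgen x) {q : Fin N → ℤ}
    (hq1 : ∀ i, q i = 1 ∨ q i = -1) :
    ∀ m : ℕ, ∀ v : EuclideanSpace ℝ (Fin (d+1)), v ≠ 0 →
      (∀ i, 0 ≤ (q i : ℝ) * val x v i) → d ≤ (Zf x v).card + m →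
      ∃ v', v' ≠ 0 ∧ (∀ i, 0 ≤ (q i : ℝ) * val x v' i) ∧ d ≤ (Zf x v').card := by
  intro m
  induction m with
  | zero => exact fun v hv0 hvP hle => ⟨v, hv0, hvP, by omega⟩
  | succ m ih =>
    intro v hv0 hvP hle
    by_cases hd : d ≤ (Zf x v).card
    · exact ⟨v, hv0, hvP, hd⟩
    · obtain ⟨v'', h0, hP, hc⟩ := grow hdN hgen hq1 hv0 hvP (by omega)
      exact ih v'' h0 hP (by omega)

lemma main_exists (hdN : d < N) (hgen : Hgen x) {q : Fin N → ℤ}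
    (hq : ∃ v : EuclideanSpace ℝ (Fin (d+1)), ∀ i, q i = sgnR (val x v i)) :
    (∀ i, q i = 1 ∨ q i = -1) ∧
    ∃ v, v ≠ 0 ∧ (∀ i, 0 ≤ (q i : ℝ) * val x v i) ∧ (Zf x v).card = d := by
  obtain ⟨v₀, hv₀⟩ := hq
  have hq1 : ∀ i, q i = 1 ∨ q i = -1 := by
    intro i
    rw [hv₀ i]
    unfold sgnR
    split <;> simp
  have hP : ∀ v : EuclideanSpace ℝ (Fin (d+1)),
      (∀ i, q i = sgnR (val x v i)) → ∀ i, 0 ≤ (q i : ℝ) * val x v i := by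
    intro v hv i
    rw [hv i]
    unfold sgnR
    split
    · rename_i h; push_cast; simpa using h
    · rename_i h; push_cast; push_neg at h; nlinarith
  obtain ⟨v₁, hv₁0, hv₁P⟩ :
      ∃ v₁ : EuclideanSpace ℝ (Fin (d+1)), v₁ ≠ 0 ∧ ∀ i, 0 ≤ (q i : ℝ) * val x v₁ i := by
    by_cases h0 : v₀ = 0
    · refine ⟨WithLp.toLp 2 (Fin.snoc 0 1 : Fin (d+1) → ℝ), ?_, ?_⟩
      · intro hz
        have h1 := congrArg (fun u : EuclideanSpace ℝ (Fin (d+1)) => u (Fin.last d)) hz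
        simp at h1
      · intro i
        have hval : val x (WithLp.toLp 2 (Fin.snoc 0 1 : Fin (d+1) → ℝ)) i = 1 := by
          rw [val_snoc]
          simp
        rw [hval, mul_one]
        have hq1' : q i = 1 := by
          rw [hv₀ i, h0]
          have hz : val x (0 : EuclideanSpace ℝ (Fin (d+1))) i = 0 := by simp [val]
          rw [hz]
          unfold sgnR
          simp
        rw [hq1']
        norm_num
    · exact ⟨v₀, h0, hP v₀ hv₀⟩
  obtain ⟨v', hv'0, hv'P, hv'c⟩ := reach hdN hgen hq1 d v₁ hv₁0 hv₁P (by omega)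
  refine ⟨hq1, v', hv'0, hv'P, le_antisymm ?_ hv'c⟩
  by_cases hh : Fin.init (v' : Fin (d+1) → ℝ) = 0
  · have hb : v' (Fin.last d) ≠ 0 := by
      intro hb0
      apply hv'0
      ext j
      induction j using Fin.lastCases with
      | last => simpa using hb0
      | cast j => simpa [Fin.init] using congrFun hh j
    have hZ : Zf x v' = ∅ := by
      rw [Finset.eq_empty_iff_forall_notMem]
      intro i hi
      rw [mem_Zf, val_self, hh] at hi
      simp at hi
      exact hb hi
    rw [hZ]
    simp
  · have hle := hgen (Fin.init (v' : Fin (d+1) → ℝ)) (v' (Fin.last d)) hh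
    have hsub : (↑(Zf x v') : Set (Fin N)) ⊆
        {i : Fin N | (∑ j, Fin.init (v' : Fin (d+1) → ℝ) j * x i j) + v' (Fin.last d) = 0} := by
      intro i hi
      rw [Finset.mem_coe, mem_Zf, val_self] at hi
      exact hi
    calc (Zf x v').card = (↑(Zf x v') : Set (Fin N)).ncard := (Set.ncard_coe_finset _).symm
      _ ≤ _ := Set.ncard_le_ncard hsub (Set.toFinite _)
      _ ≤ d := hle

lemma proportional (hdN : d < N) (hgen : Hgen x) {Z : Finset (Fin N)} (hZ : Z.card = d)
    {a b : EuclideanSpace ℝ (Fin (d+1))} (ha : a ∈ Wsp x Z) (ha0 : a ≠ 0)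
    (hb : b ∈ Wsp x Z) : ∃ c : ℝ, b = c • a := by
  have h1 : Module.finrank ℝ (Wsp x Z) = 1 := by
    rw [finrank_Wsp hdN hgen (by omega)]
    omega
  have hle : Submodule.span ℝ {a} ≤ Wsp x Z := by
    rw [Submodule.span_le, Set.singleton_subset_iff]
    exact ha
  have heq : Submodule.span ℝ {a} = Wsp x Z := by
    apply Submodule.eq_of_le_of_finrank_le hle
    rw [h1, finrank_span_singleton ha0]
  obtain ⟨c, hc⟩ := Submodule.mem_span_singleton.mp (heq ▸ hb)
  exact ⟨c, hc.symm⟩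

lemma enum_congr {Z Z' : Finset (Fin N)} (hzz : Z = Z') (h : Z.card = d) (h' : Z'.card = d)
    (j : Fin d) : (Z'.orderIsoOfFin h' j : Fin N) = (Z.orderIsoOfFin h j : Fin N) := by
  subst hzz
  rfl

lemma min'_congr {Z Z' : Finset (Fin N)} (hzz : Z = Z') (h : (Zᶜ).Nonempty)
    (h' : (Z'ᶜ).Nonempty) : (Z'ᶜ).min' h' = (Zᶜ).min' h := by
  subst hzz
  rfl

end Stmt4Aux

/-- The number of labelings of N > d points in general position realizable by
affine classifiers is at most 2^(d+1) * C(N,d). -/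
theorem stmt4 (d N : ℕ) (hdN : d < N) (x : Fin N → (Fin d → ℝ))
    (hgen : ∀ (h : Fin d → ℝ) (b : ℝ), h ≠ 0 →
      Set.ncard {i : Fin N | (∑ j, h j * x i j) + b = 0} ≤ d) :
    Set.ncard {q : Fin N → ℤ | ∃ (h : Fin d → ℝ) (b : ℝ),
        ∀ i, q i = sgnR ((∑ j, h j * x i j) + b)}
      ≤ 2 ^ (d + 1) * N.choose d := by
  classical
  have hgen' : Stmt4Aux.Hgen x := hgen
  set A := {q : Fin N → ℤ | ∃ (h : Fin d → ℝ) (b : ℝ),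
      ∀ i, q i = sgnR ((∑ j, h j * x i j) + b)} with hA
  have key : ∀ q ∈ A, (∀ i, q i = 1 ∨ q i = -1) ∧
      ∃ v, v ≠ 0 ∧ (∀ i, 0 ≤ ((q i : ℝ)) * Stmt4Aux.val x v i) ∧
        (Stmt4Aux.Zf x v).card = d := by
    rintro q ⟨h, b, hq⟩
    exact Stmt4Aux.main_exists hdN hgen'
      ⟨WithLp.toLp 2 (Fin.snoc h b : Fin (d+1) → ℝ), fun i => by rw [Stmt4Aux.val_snoc]; exact hq i⟩
  have key2 : ∀ q : ↥A, ∃ v : EuclideanSpace ℝ (Fin (d+1)), v ≠ 0 ∧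
      (∀ i, 0 ≤ ((q : Fin N → ℤ) i : ℝ) * Stmt4Aux.val x v i) ∧
      (Stmt4Aux.Zf x v).card = d :=
    fun q => (key q q.2).2
  choose V hV0 hVP hVc using key2
  have hq1 : ∀ q : ↥A, ∀ i, (q : Fin N → ℤ) i = 1 ∨ (q : Fin N → ℤ) i = -1 :=
    fun q => (key q q.2).1
  have hcompl : ∀ q : ↥A, ((Stmt4Aux.Zf x (V q))ᶜ).Nonempty := by
    intro q
    rw [← Finset.card_pos, Finset.card_compl, hVc q, Fintype.card_fin]
    omega
  set Φ : ↥A → {Z : Finset (Fin N) // Z.card = d} × (Fin d → Bool) × Bool := fun q =>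
    (⟨Stmt4Aux.Zf x (V q), hVc q⟩,
     fun j => decide ((q : Fin N → ℤ)
       ((Stmt4Aux.Zf x (V q)).orderIsoOfFin (hVc q) j : Fin N) = 1),
     decide ((q : Fin N → ℤ) (((Stmt4Aux.Zf x (V q))ᶜ).min' (hcompl q)) = 1)) with hΦ
  have hpm : ∀ (a b : ℤ), (a = 1 ∨ a = -1) → (b = 1 ∨ b = -1) → ((a = 1) ↔ (b = 1)) →
      a = b := by
    rintro a b (rfl | rfl) (rfl | rfl) hiff <;> simp_all
  have hinj : Function.Injective Φ := by
    intro q q' heq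
    rw [hΦ] at heq
    simp only [Prod.mk.injEq, Subtype.mk.injEq] at heq
    obtain ⟨hZ, h2, h3⟩ := heq
    have hqW : V q ∈ Stmt4Aux.Wsp x (Stmt4Aux.Zf x (V q)) :=
      Stmt4Aux.mem_Wsp.mpr (fun i hi => Stmt4Aux.mem_Zf.mp hi)
    have hq'W : V q' ∈ Stmt4Aux.Wsp x (Stmt4Aux.Zf x (V q)) := by
      rw [hZ]
      exact Stmt4Aux.mem_Wsp.mpr (fun i hi => Stmt4Aux.mem_Zf.mp hi)
    obtain ⟨c, hc⟩ := Stmt4Aux.proportional hdN hgen' (hVc q) hqW (hV0 q) hq'W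
    have hval' : ∀ i, Stmt4Aux.val x (V q') i = c * Stmt4Aux.val x (V q) i := by
      intro i
      rw [hc, Stmt4Aux.val_smul]
    have hposq : ∀ j, j ∉ Stmt4Aux.Zf x (V q) →
        0 < ((q : Fin N → ℤ) j : ℝ) * Stmt4Aux.val x (V q) j := by
      intro j hj
      have hle := hVP q j
      have hne : Stmt4Aux.val x (V q) j ≠ 0 := fun h0 => hj (Stmt4Aux.mem_Zf.mpr h0)
      have hqz : ((q : Fin N → ℤ) j : ℝ) ≠ 0 := by
        rcases hq1 q j with h1 | h1 <;> simp [h1]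
      exact lt_of_le_of_ne hle (Ne.symm (mul_ne_zero hqz hne))
    have hposq' : ∀ j, j ∉ Stmt4Aux.Zf x (V q) →
        0 < ((q' : Fin N → ℤ) j : ℝ) * (c * Stmt4Aux.val x (V q) j) := by
      intro j hj
      have hj' : j ∉ Stmt4Aux.Zf x (V q') := by rw [← hZ]; exact hj
      have hle := hVP q' j
      rw [hval' j] at hle
      have hne : Stmt4Aux.val x (V q') j ≠ 0 := fun h0 => hj' (Stmt4Aux.mem_Zf.mpr h0)
      rw [hval' j] at hne
      have hqz : ((q' : Fin N → ℤ) j : ℝ) ≠ 0 := by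
        rcases hq1 q' j with h1 | h1 <;> simp [h1]
      exact lt_of_le_of_ne hle (Ne.symm (mul_ne_zero hqz hne))
    have hmin := Stmt4Aux.min'_congr hZ (hcompl q) (hcompl q')
    rw [hmin] at h3
    have hbitq : (q : Fin N → ℤ) (((Stmt4Aux.Zf x (V q))ᶜ).min' (hcompl q)) =
        (q' : Fin N → ℤ) (((Stmt4Aux.Zf x (V q))ᶜ).min' (hcompl q)) :=
      hpm _ _ (hq1 q _) (hq1 q' _) (decide_eq_decide.mp h3)
    have hi₁nZ : ((Stmt4Aux.Zf x (V q))ᶜ).min' (hcompl q) ∉ Stmt4Aux.Zf x (V q) :=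
      Finset.mem_compl.mp (Finset.min'_mem _ _)
    have hp1 := hposq _ hi₁nZ
    have hp2 := hposq' _ hi₁nZ
    rw [← hbitq] at hp2
    have hcpos : 0 < c := by nlinarith [mul_pos hp1 hp2]
    apply Subtype.ext
    funext i
    by_cases hi : i ∈ Stmt4Aux.Zf x (V q)
    · have hj := congrFun h2 (((Stmt4Aux.Zf x (V q)).orderIsoOfFin (hVc q)).symm ⟨i, hi⟩)
      have henum : ((Stmt4Aux.Zf x (V q)).orderIsoOfFin (hVc q)
          (((Stmt4Aux.Zf x (V q)).orderIsoOfFin (hVc q)).symm ⟨i, hi⟩) : Fin N) = i := by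
        rw [OrderIso.apply_symm_apply]
      have henum' : ((Stmt4Aux.Zf x (V q')).orderIsoOfFin (hVc q')
          (((Stmt4Aux.Zf x (V q)).orderIsoOfFin (hVc q)).symm ⟨i, hi⟩) : Fin N) = i := by
        rw [Stmt4Aux.enum_congr hZ (hVc q) (hVc q')]
        exact henum
      rw [henum, henum'] at hj
      exact hpm _ _ (hq1 q i) (hq1 q' i) (decide_eq_decide.mp hj)
    · have hp3 := hposq i hi
      have hp4 := hposq' i hi
      have hp5 : 0 < ((q' : Fin N → ℤ) i : ℝ) * Stmt4Aux.val x (V q) i := by nlinarith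
      rcases hq1 q i with e1 | e1 <;> rcases hq1 q' i with e2 | e2
      · rw [e1, e2]
      · exfalso
        rw [e1] at hp3
        rw [e2] at hp5
        push_cast at hp3 hp5
        linarith
      · exfalso
        rw [e1] at hp3
        rw [e2] at hp5
        push_cast at hp3 hp5
        linarith
      · rw [e1, e2]
  calc Set.ncard A = Nat.card ↥A := (Nat.card_coe_set_eq A).symm
    _ ≤ Nat.card ({Z : Finset (Fin N) // Z.card = d} × (Fin d → Bool) × Bool) :=
        Nat.card_le_card_of_injective Φ hinj
    _ = 2 ^ (d + 1) * N.choose d := by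
        rw [Nat.card_eq_fintype_card]
        simp only [Fintype.card_prod, Fintype.card_finset_len, Fintype.card_fin,
          Fintype.card_fun, Fintype.card_bool]
        rw [pow_succ]
        ring
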